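/- Let X be a measurable space, μ a probability measure on X, f* : X → ℝ measurable, and q : X × ℝ → [0,∞) measurable such that for μ-a.e. x, q(x,·) is a probability density on ℝ with respect to Lebesgue measure. Let ρ be the probability measure on X × ℝ determined by dρ(x,y) = q(x, y − f*(x)) dy dμ(x) (i.e., ρ is the composition of μ with the kernel x ↦ Lebesgue measure with density y ↦ q(x, y − f*(x))). Then for every measurable f : X → ℝ, the pushforward of ρ under the map (x,y) ↦ y − f(x) equals Lebesgue measure with density p_{E_f}(t) = ∫_X q(x, t + f(x) − f*(x)) dμ(x); moreover p_{E_f}(0) = R(f), where R(f) = ∫_X q(x, f(x) − f*(x)) dμ(x) is the modal regression risk of f (Theorem 3.4). -/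

import Mathlib

open MeasureTheory
open scoped ENNReal

/-- Translation invariance of the Lebesgue lower integral. -/
lemma lintegral_translate {h : ℝ → ℝ≥0∞} (hh : Measurable h) (a : ℝ) :
    ∫⁻ t, h (t + a) = ∫⁻ t, h t := by
  conv_rhs => rw [← map_add_right_eq_self volume a]
  rw [lintegral_map hh (measurable_add_const a)]

/-- Theorem 3.4: if `ρ` is the joint distribution determined by
`dρ(x,y) = q(x, y − f*(x)) dy dμ(x)`, then the pushforward of `ρ` under
`(x,y) ↦ y − f(x)` is Lebesgue measure with density
`p_{E_f}(t) = ∫ q(x, t + f(x) − f*(x)) dμ(x)`, and `p_{E_f}(0) = R(f)`. -/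
theorem residual_density_and_modal_risk
    {X : Type*} [MeasurableSpace X] (μ : Measure X) [IsProbabilityMeasure μ]
    (fstar : X → ℝ) (hfstar : Measurable fstar)
    (q : X × ℝ → ℝ) (hq_meas : Measurable q) (hq_nonneg : ∀ x t, 0 ≤ q (x, t))
    (hq_dens : ∀ᵐ x ∂μ, ∫ t, q (x, t) = 1)
    (ρ : Measure (X × ℝ))
    (hρ : ρ = μ.bind (fun x =>
      (volume.withDensity fun y => ENNReal.ofReal (q (x, y - fstar x))).map
        (fun y => (x, y))))
    (f : X → ℝ) (hf : Measurable f) :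
    ρ.map (fun z => z.2 - f z.1)
        = volume.withDensity
            (fun t => ENNReal.ofReal (∫ x, q (x, t + f x - fstar x) ∂μ)) ∧
      (∫ x, q (x, (0 : ℝ) + f x - fstar x) ∂μ) = ∫ x, q (x, f x - fstar x) ∂μ := by
  -- notation
  set Q : X × ℝ → ℝ≥0∞ := fun p => ENNReal.ofReal (q p) with hQdef
  have hQ : Measurable Q := hq_meas.ennreal_ofReal
  -- the integrand as a function on the product, measurable
  have hH : Measurable fun p : X × ℝ => Q (p.1, p.2 + f p.1 - fstar p.1) :=
    hQ.comp (measurable_fst.prodMk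
      ((measurable_snd.add (hf.comp measurable_fst)).sub (hfstar.comp measurable_fst)))
  -- a.e. the conditional density integrates (as a lower integral) to 1
  have hint : ∀ᵐ x ∂μ, ∫⁻ t, Q (x, t) = 1 := by
    filter_upwards [hq_dens] with x hx
    have hInt : Integrable (fun t => q (x, t)) := by
      by_contra h
      rw [integral_undef h] at hx
      norm_num at hx
    rw [← ofReal_integral_eq_lintegral_ofReal hInt
      (Filter.Eventually.of_forall fun t => hq_nonneg x t), hx, ENNReal.ofReal_one]
  -- per-x translation identity
  have htrans : ∀ x : X, ∫⁻ t, Q (x, t + f x - fstar x) = ∫⁻ t, Q (x, t) := by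
    intro x
    have : (fun t => Q (x, t + f x - fstar x))
        = fun t => Q (x, t + (f x - fstar x)) := by
      funext t; ring_nf
    rw [this]
    exact lintegral_translate (hQ.comp measurable_prodMk_left) (f x - fstar x)
  -- the density in ℝ≥0∞
  set L : ℝ → ℝ≥0∞ := fun t => ∫⁻ x, Q (x, t + f x - fstar x) ∂μ with hLdef
  have hLmeas : Measurable L := hH.lintegral_prod_left'
  have hH' : Measurable (Function.uncurry fun t x => Q (x, t + f x - fstar x)) := by
    have : (Function.uncurry fun t x => Q (x, t + f x - fstar x))
        = fun p : ℝ × X => Q (p.2, p.1 + f p.2 - fstar p.2) := rfl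
    rw [this]
    exact hQ.comp (measurable_snd.prodMk
      ((measurable_fst.add (hf.comp measurable_snd)).sub (hfstar.comp measurable_snd)))
  have hLone : ∫⁻ t, L t = 1 := by
    show ∫⁻ t, ∫⁻ x, Q (x, t + f x - fstar x) ∂μ ∂volume = 1
    rw [lintegral_lintegral_swap hH'.aemeasurable]
    calc ∫⁻ x, ∫⁻ t, Q (x, t + f x - fstar x) ∂volume ∂μ
        = ∫⁻ x, ∫⁻ t, Q (x, t) ∂volume ∂μ := by
          exact lintegral_congr fun x => htrans x
      _ = ∫⁻ _, 1 ∂μ := lintegral_congr_ae hint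
      _ = 1 := by simp
  -- a.e. t, L t < ∞ and hence ofReal (∫ q) = L t
  have hLfin : ∀ᵐ t, L t < ⊤ := ae_lt_top hLmeas (by rw [hLone]; exact ENNReal.one_ne_top)
  have hae : ∀ᵐ t, ENNReal.ofReal (∫ x, q (x, t + f x - fstar x) ∂μ) = L t := by
    filter_upwards [hLfin] with t ht
    have hmeas : Measurable fun x => q (x, t + f x - fstar x) :=
      hq_meas.comp (measurable_id.prodMk
        (((measurable_const.add hf).sub hfstar)))
    have hnn : 0 ≤ᵐ[μ] fun x => q (x, t + f x - fstar x) :=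
      Filter.Eventually.of_forall fun x => hq_nonneg x _
    have hInt : Integrable (fun x => q (x, t + f x - fstar x)) μ :=
      ⟨hmeas.aestronglyMeasurable, (hasFiniteIntegral_iff_ofReal hnn).2 ht⟩
    exact ofReal_integral_eq_lintegral_ofReal hInt hnn
  constructor
  · -- measurability of the kernel
    set ν : X → Measure ℝ := fun x =>
      volume.withDensity fun y => ENNReal.ofReal (q (x, y - fstar x)) with hνdef
    set κ : X → Measure (X × ℝ) := fun x => (ν x).map (fun y => (x, y)) with hκdef
    have hκapp : ∀ (x : X) (s : Set (X × ℝ)), MeasurableSet s →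
        κ x s = ∫⁻ y, s.indicator (fun p : X × ℝ => Q (p.1, p.2 - fstar p.1)) (x, y) := by
      intro x s hs
      rw [hκdef]
      rw [Measure.map_apply measurable_prodMk_left hs, hνdef,
        withDensity_apply _ (measurable_prodMk_left hs),
        ← lintegral_indicator (measurable_prodMk_left hs) _]
      refine lintegral_congr fun y => ?_
      by_cases h : (x, y) ∈ s <;> simp [Set.indicator, h, hQdef]
    have hκmeas : Measurable κ := by
      apply Measure.measurable_of_measurable_coe
      intro s hs
      have hfun : Measurable fun p : X × ℝ =>
          s.indicator (fun p : X × ℝ => Q (p.1, p.2 - fstar p.1)) p :=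
        Measurable.indicator (hQ.comp (measurable_fst.prodMk
          (measurable_snd.sub (hfstar.comp measurable_fst)))) hs
      simp only [funext fun x => hκapp x s hs]
      exact hfun.lintegral_prod_right'
    -- now prove the measure equality
    have hg : Measurable fun z : X × ℝ => z.2 - f z.1 :=
      measurable_snd.sub (hf.comp measurable_fst)
    ext s hs
    rw [Measure.map_apply hg hs, hρ,
      Measure.bind_apply (hg hs) hκmeas.aemeasurable,
      withDensity_apply _ hs]
    -- compute κ x of the preimage
    have hpre : MeasurableSet ((fun z : X × ℝ => z.2 - f z.1) ⁻¹' s) := hg hs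
    have hκval : ∀ x : X, κ x ((fun z : X × ℝ => z.2 - f z.1) ⁻¹' s)
        = ∫⁻ t, s.indicator (fun t => Q (x, t + f x - fstar x)) t := by
      intro x
      rw [hκapp x _ hpre]
      have hpt : ∀ y : ℝ,
          ((fun z : X × ℝ => z.2 - f z.1) ⁻¹' s).indicator
            (fun p : X × ℝ => Q (p.1, p.2 - fstar p.1)) (x, y)
          = s.indicator (fun t => Q (x, t + f x - fstar x)) (y - f x) := by
        intro y
        by_cases h : y - f x ∈ s
        · have h1 : (x, y) ∈ (fun z : X × ℝ => z.2 - f z.1) ⁻¹' s := h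
          rw [Set.indicator_of_mem h1, Set.indicator_of_mem h]
          have : y - f x + f x - fstar x = y - fstar x := by ring
          rw [this]
        · have h1 : (x, y) ∉ (fun z : X × ℝ => z.2 - f z.1) ⁻¹' s := h
          rw [Set.indicator_of_notMem h1, Set.indicator_of_notMem h]
      simp only [hpt]
      have hmeasind : Measurable fun t => s.indicator
          (fun t => Q (x, t + f x - fstar x)) t :=
        Measurable.indicator (hH.comp (measurable_const.prodMk measurable_id)) hs
      have := lintegral_translate hmeasind (-(f x))
      simpa [sub_eq_add_neg] using this
    calc ∫⁻ x, κ x ((fun z : X × ℝ => z.2 - f z.1) ⁻¹' s) ∂μ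
        = ∫⁻ x, ∫⁻ t, s.indicator (fun t => Q (x, t + f x - fstar x)) t ∂volume ∂μ :=
          lintegral_congr hκval
      _ = ∫⁻ t, ∫⁻ x, s.indicator (fun t => Q (x, t + f x - fstar x)) t ∂μ ∂volume := by
          apply lintegral_lintegral_swap
          have heq : (Function.uncurry fun x t =>
              s.indicator (fun t => Q (x, t + f x - fstar x)) t)
              = Set.indicator (Prod.snd ⁻¹' s)
                  (fun p : X × ℝ => Q (p.1, p.2 + f p.1 - fstar p.1)) := by
            funext p
            by_cases h : p.2 ∈ s <;>
              simp [Function.uncurry, Set.indicator, h]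
          exact (heq ▸ (hH.indicator (hs.preimage measurable_snd))).aemeasurable
      _ = ∫⁻ t, s.indicator L t ∂volume := by
          refine lintegral_congr fun t => ?_
          by_cases h : t ∈ s
          · simp only [Set.indicator_of_mem h, hLdef]
          · simp [Set.indicator_of_notMem h]
      _ = ∫⁻ t in s, L t ∂volume := lintegral_indicator hs _
      _ = ∫⁻ t in s, ENNReal.ofReal (∫ x, q (x, t + f x - fstar x) ∂μ) ∂volume := by
          refine lintegral_congr_ae (ae_restrict_of_ae ?_)
          filter_upwards [hae] with t ht using ht.symm
  · simp only [zero_add]
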